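/- Let $V \in \mathbb{R}^{n\times k}$ be the matrix of right singular vectors of $P = (\theta^*_{z^*_1},\dots,\theta^*_{z^*_n})$ (rank at most $k$). If every cluster has size at least $\beta n / k$, then for every $i \in [n]$, $\|V^T e_i\| \leq \sqrt{k/(\beta n)}$. -/

import Mathlib

open Matrix Finset

noncomputable def vnorm {ι : Type*} [Fintype ι] (v : ι → ℝ) : ℝ :=
  Real.sqrt (∑ i, v i ^ 2)

theorem row_norm_of_singular_vectors (p n k : ℕ) (β : ℝ) (hβ0 : 0 < β)
    (z : Fin n → Fin k) (θ : Fin k → Fin p → ℝ)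
    (hsize : ∀ j : Fin k,
      β * n / k ≤ ((Finset.univ.filter fun i => z i = j).card : ℝ))
    (P : Matrix (Fin p) (Fin n) ℝ) (hP : ∀ x i, P x i = θ (z i) x)
    (V : Matrix (Fin n) (Fin k) ℝ) (hVorth : Vᵀ * V = 1)
    -- the columns of V lie in the row space of P
    (hspan : ∀ j : Fin k, (fun i => V i j) ∈
      Submodule.span ℝ (Set.range fun x : Fin p => fun i => P x i)) :
    ∀ i : Fin n, vnorm (fun j => V i j) ≤ Real.sqrt (k / (β * n)) := by
  intro i
  rcases Nat.eq_zero_or_pos k with hk | hk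
  · subst hk
    simp only [vnorm, Finset.univ_eq_empty, Finset.sum_empty, Real.sqrt_zero]
    exact Real.sqrt_nonneg _
  have hn : 0 < n := i.pos
  have hnR : (0:ℝ) < n := by exact_mod_cast hn
  have hkR : (0:ℝ) < k := by exact_mod_cast hk
  -- cluster sizes
  set Nc : Fin k → ℝ := fun c => ((Finset.univ.filter fun i => z i = c).card : ℝ) with hNc
  have hNpos : ∀ c, 0 < Nc c := by
    intro c
    refine lt_of_lt_of_le ?_ (hsize c)
    positivity
  -- representatives
  have hrepex : ∀ c : Fin k, ∃ r, z r = c := by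
    intro c
    have : 0 < (Finset.univ.filter fun i => z i = c).card := by
      exact Nat.cast_pos.mp (hNpos c)
    obtain ⟨r, hr⟩ := Finset.card_pos.mp this
    exact ⟨r, (Finset.mem_filter.mp hr).2⟩
  choose rep hrep using hrepex
  -- columns of V are constant on clusters
  let S : Submodule ℝ (Fin n → ℝ) :=
  { carrier := {v | ∀ a b, z a = z b → v a = v b}
    add_mem' := fun hv hw a b h => by
      simp only [Pi.add_apply]; rw [hv a b h, hw a b h]
    zero_mem' := fun a b h => rfl
    smul_mem' := fun c v hv a b h => by
      simp only [Pi.smul_apply]; rw [hv a b h] }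
  have hrows : ∀ x : Fin p, (fun i => P x i) ∈ S := by
    intro x a b h
    simp only [hP, h]
  have hcol : ∀ j a b, z a = z b → V a j = V b j := by
    intro j
    exact Submodule.span_le.mpr (Set.range_subset_iff.mpr hrows) (hspan j)
  -- the square matrix W
  set W : Matrix (Fin k) (Fin k) ℝ :=
    fun c j => Real.sqrt (Nc c) * V (rep c) j with hW
  have hWorth : Wᵀ * W = 1 := by
    rw [← hVorth]
    ext j l
    simp only [Matrix.mul_apply, Matrix.transpose_apply]; simp only [hW]
    rw [← Finset.sum_fiberwise Finset.univ z (fun i => V i j * V i l)]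
    refine Finset.sum_congr rfl ?_
    intro c _
    have hs : ∀ a ∈ Finset.univ.filter fun i => z i = c,
        V a j * V a l = V (rep c) j * V (rep c) l := by
      intro a ha
      have hz : z a = z (rep c) := by
        rw [(Finset.mem_filter.mp ha).2, hrep]
      rw [hcol j a (rep c) hz, hcol l a (rep c) hz]
    rw [Finset.sum_congr rfl hs, Finset.sum_const, nsmul_eq_mul]
    have : Real.sqrt (Nc c) * V (rep c) j * (Real.sqrt (Nc c) * V (rep c) l)
        = (Real.sqrt (Nc c) * Real.sqrt (Nc c)) * (V (rep c) j * V (rep c) l) := by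
      ring
    rw [this, Real.mul_self_sqrt (le_of_lt (hNpos c))]
  have hWWT : W * Wᵀ = 1 := mul_eq_one_comm.mp hWorth
  -- diagonal entry at c = z i
  set c := z i with hc
  have hdiag : (W * Wᵀ) c c = 1 := by rw [hWWT]; simp
  have hsum : ∑ j, Nc c * V (rep c) j ^ 2 = 1 := by
    rw [← hdiag]
    simp only [Matrix.mul_apply, Matrix.transpose_apply]; simp only [hW]
    refine Finset.sum_congr rfl fun j _ => ?_
    have : Real.sqrt (Nc c) * V (rep c) j * (Real.sqrt (Nc c) * V (rep c) j)
        = (Real.sqrt (Nc c) * Real.sqrt (Nc c)) * V (rep c) j ^ 2 := by ring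
    rw [this, Real.mul_self_sqrt (le_of_lt (hNpos c))]
  have hrowsum : ∑ j, V i j ^ 2 = 1 / Nc c := by
    have h1 : ∑ j, V i j ^ 2 = ∑ j, V (rep c) j ^ 2 := by
      refine Finset.sum_congr rfl fun j _ => ?_
      rw [hcol j i (rep c) (by rw [hrep])]
    have h2 : Nc c * ∑ j, V (rep c) j ^ 2 = 1 := by
      rw [Finset.mul_sum]; exact hsum
    rw [h1, eq_div_iff (ne_of_gt (hNpos c)), mul_comm, h2]
  unfold vnorm
  refine Real.sqrt_le_sqrt ?_
  rw [hrowsum]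
  rw [div_le_div_iff₀ (hNpos c) (by positivity)]
  have := hsize c
  calc (1:ℝ) * (β * n) = (β * n / k) * k := by field_simp
    _ ≤ Nc c * k := by
        apply mul_le_mul_of_nonneg_right (hsize c) (le_of_lt hkR)
    _ = ↑k * Nc c := mul_comm _ _
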